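/- On H = ℝ, with f = ι_{{0}} and g = 0, the iteration x₁ᵏ = prox_{αf}(zᵏ), x₂ᵏ = prox_{βg}((1+β/α)x₁ᵏ - (β/α)zᵏ), z^{k+1} = zᵏ + θ(x₂ᵏ - x₁ᵏ) reduces to z^{k+1} = (1 - θβ/α)zᵏ; consequently, for any z⁰ ≠ 0, (zᵏ) converges to 0 if and only if θ ∈ (0, 2α/β). -/

import Mathlib

open Filter Topology

/-- Counterexample on `ℝ` with `f = ι_{0}`, `g = 0`: the iteration reduces to
`z^{k+1} = (1 - θβ/α) zᵏ` and, for `z⁰ ≠ 0`, converges to `0` iff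
`θ ∈ (0, 2α/β)`. -/
theorem counterexample_f_indicator_g_zero
    (α β θ : ℝ) (hα : 0 < α) (hβ : 0 < β) (hθ : θ ≠ 0)
    (x1 x2 z : ℕ → ℝ)
    (hx1 : ∀ k, x1 k = 0)                           -- prox_{αf} = 0 since f = ι_{{0}}
    (hx2 : ∀ k, x2 k = (1 + β / α) * x1 k - (β / α) * z k)  -- prox_{βg} = Id since g = 0
    (hz : ∀ k, z (k + 1) = z k + θ * (x2 k - x1 k))
    (hz0 : z 0 ≠ 0) :
    (∀ k, z (k + 1) = (1 - θ * β / α) * z k) ∧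
      (Tendsto z atTop (𝓝 0) ↔ 0 < θ ∧ θ < 2 * α / β) := by
  have hα' : α ≠ 0 := hα.ne'
  have hrec : ∀ k, z (k + 1) = (1 - θ * β / α) * z k := by
    intro k
    rw [hz k, hx2 k, hx1 k]
    field_simp
    ring
  refine ⟨hrec, ?_⟩
  have hzk : ∀ k, z k = (1 - θ * β / α) ^ k * z 0 := by
    intro k
    induction k with
    | zero => simp
    | succ n ih => rw [hrec n, ih, pow_succ]; ring
  have ht : 0 < β / α := div_pos hβ hα
  have hiff : |1 - θ * β / α| < 1 ↔ 0 < θ ∧ θ < 2 * α / β := by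
    rw [abs_lt]
    have he : θ * β / α = θ * (β / α) := by ring
    rw [he]
    constructor
    · rintro ⟨h1, h2⟩
      have hp : 0 < θ * (β / α) := by linarith
      have hθp : 0 < θ := by
        by_contra hc; push_neg at hc
        nlinarith
      refine ⟨hθp, ?_⟩
      have h2' : θ * (β / α) < 2 := by linarith
      rw [lt_div_iff₀ hβ]
      have key : θ * (β / α) * α < 2 * α := mul_lt_mul_of_pos_right h2' hα
      calc θ * β = θ * (β / α) * α := by field_simp
        _ < 2 * α := key
    · rintro ⟨h1, h2⟩
      have h2' : θ * β < 2 * α := by rw [lt_div_iff₀ hβ] at h2; linarith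
      have hlt : θ * (β / α) < 2 := by
        rw [mul_div_assoc'] at *
        rw [div_lt_iff₀ hα]; linarith
      have hpos : 0 < θ * (β / α) := mul_pos h1 ht
      constructor <;> linarith
  rw [← hiff, ← tendsto_pow_atTop_nhds_zero_iff]
  constructor
  · intro h
    have := h.mul_const (z 0)⁻¹
    simp only [zero_mul] at this
    refine this.congr fun k => ?_
    rw [hzk k]; field_simp
  · intro h
    have := h.mul_const (z 0)
    simp only [zero_mul] at this
    exact this.congr fun k => (hzk k).symm
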